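/- Let U be an ℓ×ℓ complex unitary matrix with spectral decomposition U = Σ_{r=1}^m λ_r F_r, and let M̂ = Σ_r F_r ∘ conj(F_r) be its average mixing matrix. Then trace(M̂) = (1/ℓ) Σ_{r=1}^m (trace F_r)² holds if and only if U is walk-regular, i.e., each F_r has constant diagonal (necessarily equal to trace(F_r)/ℓ). -/

import Mathlib

open Matrix Finset

/-- The average mixing matrix `M̂ = ∑ r, F_r ∘ conj(F_r)` of a quantum walk with
spectral idempotents `F_r`, where `∘` is the entrywise (Hadamard) product and
`conj` is entrywise complex conjugation. -/
noncomputable def avgMix {ℓ m : ℕ} (F : Fin m → Matrix (Fin ℓ) (Fin ℓ) ℂ) :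
    Matrix (Fin ℓ) (Fin ℓ) ℂ :=
  ∑ r, Matrix.hadamard (F r) ((F r).map (starRingEnd ℂ))

lemma sum_sq_pairs (n : ℕ) (d : Fin n → ℝ) :
    ∑ i, ∑ j, (d i - d j)^2
      = 2 * ((n : ℝ) * ∑ i, d i ^ 2 - (∑ i, d i)^2) := by
  have h : ∀ i j : Fin n, (d i - d j)^2 = d i^2 - 2*(d i * d j) + d j^2 := by
    intro i j; ring
  simp_rw [h, Finset.sum_add_distrib, Finset.sum_sub_distrib, Finset.sum_const,
    Finset.card_univ, Fintype.card_fin, nsmul_eq_mul, ← Finset.mul_sum,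
    ← Finset.sum_mul]
  ring

lemma cs_key (n : ℕ) (d : Fin n → ℝ) :
    (0 : ℝ) ≤ (n : ℝ) * ∑ i, d i ^ 2 - (∑ i, d i)^2 ∧
    (((n : ℝ) * ∑ i, d i ^ 2 - (∑ i, d i)^2 = 0) ↔ ∀ i j, d i = d j) := by
  have h := sum_sq_pairs n d
  have hnn : (0:ℝ) ≤ ∑ i, ∑ j : Fin n, (d i - d j)^2 :=
    Finset.sum_nonneg fun i _ => Finset.sum_nonneg fun j _ => sq_nonneg _
  constructor
  · nlinarith
  · constructor
    · intro he
      have hz : ∑ i, ∑ j : Fin n, (d i - d j)^2 = 0 := by rw [h, he]; ring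
      intro i j
      have := (Finset.sum_eq_zero_iff_of_nonneg (fun i _ =>
        Finset.sum_nonneg fun j _ => sq_nonneg _)).1 hz i (Finset.mem_univ i)
      have := (Finset.sum_eq_zero_iff_of_nonneg (fun j _ => sq_nonneg _)).1 this j
        (Finset.mem_univ j)
      have := sq_eq_zero_iff.1 this
      linarith
    · intro hc
      have : ∑ i, ∑ j : Fin n, (d i - d j)^2 = 0 := by
        apply Finset.sum_eq_zero; intro i _; apply Finset.sum_eq_zero; intro j _
        rw [hc i j]; ring
      nlinarith

/-- trace(M̂) = (1/ℓ) ∑ r, (trace F_r)² iff U is walk-regular, i.e. each F_r has constant diagonal. -/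
theorem avgMix_trace_eq_iff_walkRegular (ℓ m : ℕ) (hℓ : 0 < ℓ)
    (U : Matrix (Fin ℓ) (Fin ℓ) ℂ)
    (hU : U ∈ Matrix.unitaryGroup (Fin ℓ) ℂ)
    (lam : Fin m → ℂ) (F : Fin m → Matrix (Fin ℓ) (Fin ℓ) ℂ)
    (hdist : Function.Injective lam)
    (hmod : ∀ r, ‖lam r‖ = 1)
    (hherm : ∀ r, (F r)ᴴ = F r)
    (hidem : ∀ r, F r * F r = F r)
    (horth : ∀ r s, r ≠ s → F r * F s = 0)
    (hsum : ∑ r, F r = 1)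
    (hspec : U = ∑ r, lam r • F r)
    :
    (avgMix F).trace = ((ℓ : ℂ))⁻¹ * ∑ r, ((F r).trace) ^ 2 ↔
      ∀ r, ∀ i j : Fin ℓ, F r i i = F r j j := by
  set d : Fin m → Fin ℓ → ℝ := fun r i => (F r i i).re with hd
  have hF : ∀ r i, F r i i = (d r i : ℂ) := by
    intro r i
    have h1 : (starRingEnd ℂ) (F r i i) = F r i i := by
      conv_rhs => rw [← hherm r]
      rfl
    have := Complex.conj_eq_iff_re.1 h1
    rw [← this]
  -- trace of avgMix
  have htr : (avgMix F).trace = ((∑ r, ∑ i, d r i ^ 2 : ℝ) : ℂ) := by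
    unfold avgMix
    rw [Matrix.trace_sum]
    push_cast
    apply Finset.sum_congr rfl; intro r _
    unfold Matrix.trace
    apply Finset.sum_congr rfl; intro i _
    simp [Matrix.hadamard, Matrix.diag, hF r i, ← Complex.ofReal_pow, sq]
  have htrF : ∀ r, (F r).trace = ((∑ i, d r i : ℝ) : ℂ) := by
    intro r
    unfold Matrix.trace
    push_cast
    exact Finset.sum_congr rfl fun i _ => hF r i
  have hℓC : (ℓ : ℂ) ≠ 0 := by exact_mod_cast hℓ.ne'
  rw [htr]
  have hrhs : ∑ r, ((F r).trace) ^ 2 = ((∑ r, (∑ i, d r i)^2 : ℝ) : ℂ) := by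
    push_cast
    exact Finset.sum_congr rfl fun r _ => by rw [htrF r]; push_cast; ring
  rw [hrhs, eq_inv_mul_iff_mul_eq₀ hℓC]
  rw [show ((ℓ:ℂ)) * ((∑ r, ∑ i, d r i ^ 2 : ℝ) : ℂ)
      = (((ℓ:ℝ) * ∑ r, ∑ i, d r i ^ 2 : ℝ) : ℂ) by push_cast; ring,
    Complex.ofReal_inj]
  -- now a real statement
  have hsplit : (ℓ:ℝ) * ∑ r, ∑ i, d r i ^ 2 - ∑ r, (∑ i, d r i)^2
      = ∑ r, ((ℓ:ℝ) * ∑ i, d r i ^ 2 - (∑ i, d r i)^2) := by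
    rw [Finset.sum_sub_distrib, Finset.mul_sum]
  constructor
  · intro he r i j
    have hz : ∑ r, ((ℓ:ℝ) * ∑ i, d r i ^ 2 - (∑ i, d r i)^2) = 0 := by
      rw [← hsplit, he]; ring
    have hr0 := (Finset.sum_eq_zero_iff_of_nonneg
      (fun r _ => (cs_key ℓ (d r)).1)).1 hz r (Finset.mem_univ r)
    have := ((cs_key ℓ (d r)).2).1 hr0 i j
    rw [hF r i, hF r j, this]
  · intro hc
    have : ∀ r : Fin m, (ℓ:ℝ) * ∑ i, d r i ^ 2 - (∑ i, d r i)^2 = 0 := by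
      intro r
      exact ((cs_key ℓ (d r)).2).2 fun i j => by
        have := hc r i j; rw [hF r i, hF r j] at this; exact_mod_cast this
    have hz : ∑ r, ((ℓ:ℝ) * ∑ i, d r i ^ 2 - (∑ i, d r i)^2) = 0 :=
      Finset.sum_eq_zero fun r _ => this r
    rw [← hsplit] at hz
    linarith
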